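/- Let c = log₂ 3. For all real numbers x, y with 0 < x ≤ y, we have 2·x^c + y^c ≤ (x + y)^c. -/

import Mathlib

open Real Set

lemma rpow_two_two : (2:ℝ) ^ (2:ℝ) = 4 := by
  rw [show (2:ℝ) = ((2:ℕ):ℝ) from by norm_num]
  rw [Real.rpow_natCast]
  norm_num

lemma c_facts : 1 < Real.logb 2 3 ∧ Real.logb 2 3 < 2 ∧ (2:ℝ) ^ Real.logb 2 3 = 3 := by
  refine ⟨?_, ?_, Real.rpow_logb (by norm_num) (by norm_num) (by norm_num)⟩
  · have := Real.logb_lt_logb (b := 2) (by norm_num) (by norm_num) (show (2:ℝ) < 3 by norm_num)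
    simpa using this
  · rw [Real.logb_lt_iff_lt_rpow (by norm_num : (1:ℝ) < 2) (by norm_num : (0:ℝ) < 3),
      rpow_two_two]
    norm_num

lemma key (t : ℝ) (ht0 : 0 ≤ t) (ht1 : t ≤ 1) :
    2 * t ^ Real.logb 2 3 + 1 ≤ (1 + t) ^ Real.logb 2 3 := by
  obtain ⟨hc1, hc2, h23⟩ := c_facts
  set c := Real.logb 2 3 with hc
  have hcpos : 0 < c := by linarith
  set g : ℝ → ℝ := fun s => (1 + s) ^ c - 2 * s ^ c - 1 with hg
  have hconc : ConcaveOn ℝ (Icc (0:ℝ) 1) g := by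
    have hint : interior (Icc (0:ℝ) 1) = Ioo 0 1 := interior_Icc
    refine concaveOn_of_hasDerivWithinAt2_nonpos
      (f' := fun s => c * (1 + s) ^ (c - 1) - 2 * (c * s ^ (c - 1)))
      (f'' := fun s => c * (c - 1) * (1 + s) ^ (c - 2) - 2 * (c * (c - 1) * s ^ (c - 2)))
      (convex_Icc 0 1) ?_ ?_ ?_ ?_
    · refine ContinuousOn.sub (ContinuousOn.sub ?_ ?_) continuousOn_const
      · intro s _
        exact ((Real.continuousAt_rpow_const (1 + s) c (Or.inr hcpos.le)).comp
          (continuous_const.add continuous_id).continuousAt).continuousWithinAt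
      · exact (continuousOn_const.mul (fun s _ =>
          (Real.continuousAt_rpow_const s c (Or.inr hcpos.le)).continuousWithinAt))
    · intro s hs
      rw [hint] at hs
      have h1 : HasDerivAt (fun s : ℝ => (1 + s) ^ c) (c * (1 + s) ^ (c - 1)) s := by
        have := (Real.hasDerivAt_rpow_const (x := 1 + s) (p := c)
          (Or.inl (by nlinarith [hs.1]))).comp s ((hasDerivAt_id s).const_add 1)
        simpa [mul_comm, Function.comp_def] using this
      have h2 : HasDerivAt (fun s : ℝ => 2 * s ^ c) (2 * (c * s ^ (c - 1))) s :=
        (Real.hasDerivAt_rpow_const (x := s) (p := c) (Or.inl (ne_of_gt hs.1))).const_mul 2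
      exact ((h1.sub h2).sub_const 1).hasDerivWithinAt
    · intro s hs
      rw [hint] at hs
      have h1 : HasDerivAt (fun s : ℝ => c * (1 + s) ^ (c - 1))
          (c * ((c - 1) * (1 + s) ^ (c - 1 - 1))) s := by
        have := (Real.hasDerivAt_rpow_const (x := 1 + s) (p := c - 1)
          (Or.inl (by nlinarith [hs.1]))).comp s ((hasDerivAt_id s).const_add 1)
        simpa [mul_comm] using this.const_mul c
      have h2 : HasDerivAt (fun s : ℝ => 2 * (c * s ^ (c - 1)))
          (2 * (c * ((c - 1) * s ^ (c - 1 - 1)))) s :=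
        ((Real.hasDerivAt_rpow_const (x := s) (p := c - 1)
          (Or.inl (ne_of_gt hs.1))).const_mul c).const_mul 2
      have h := (h1.sub h2).hasDerivWithinAt (s := interior (Icc (0:ℝ) 1))
      refine h.congr_deriv ?_
      show _ = c * (c - 1) * (1 + s) ^ (c - 2) - 2 * (c * (c - 1) * s ^ (c - 2))
      rw [show c - 1 - 1 = c - 2 by ring]
      ring
    · intro s hs
      rw [hint] at hs
      obtain ⟨hs0, hs1⟩ := hs
      show c * (c - 1) * (1 + s) ^ (c - 2) - 2 * (c * (c - 1) * s ^ (c - 2)) ≤ 0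
      have hb1 : (1 + s) ^ (c - 2) ≤ 1 :=
        Real.rpow_le_one_of_one_le_of_nonpos (by linarith) (by linarith)
      have hb2 : 1 ≤ s ^ (c - 2) :=
        Real.one_le_rpow_of_pos_of_le_one_of_nonpos hs0 (le_of_lt hs1) (by linarith)
      have hcc : 0 < c * (c - 1) := by nlinarith
      nlinarith
  have hg0 : g 0 = 0 := by
    simp [hg, Real.zero_rpow (ne_of_gt hcpos), Real.one_rpow]
  have hg1 : g 1 = 0 := by
    simp only [hg]
    rw [show (1:ℝ) + 1 = 2 by norm_num, h23, Real.one_rpow]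
    ring
  have h := hconc.2 (show (0:ℝ) ∈ Icc (0:ℝ) 1 by norm_num)
    (show (1:ℝ) ∈ Icc (0:ℝ) 1 by norm_num)
    (show (0:ℝ) ≤ 1 - t by linarith) ht0 (show (1 - t) + t = 1 by ring)
  rw [hg0, hg1] at h
  simp only [smul_eq_mul, mul_zero, mul_one, zero_add, smul_zero, add_zero] at h
  have h' : 0 ≤ g t := by simpa using h
  simp only [hg] at h'
  linarith

theorem stmt0 (x y : ℝ) (hx : 0 < x) (hxy : x ≤ y) :
    2 * x ^ Real.logb 2 3 + y ^ Real.logb 2 3 ≤ (x + y) ^ Real.logb 2 3 := by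
  obtain ⟨hc1, hc2, h23⟩ := c_facts
  set c := Real.logb 2 3 with hc
  have hy : 0 < y := lt_of_lt_of_le hx hxy
  have ht0 : 0 ≤ x / y := by positivity
  have ht1 : x / y ≤ 1 := (div_le_one hy).2 hxy
  have hkey := key (x / y) ht0 ht1
  have h1 : (x + y) ^ c = y ^ c * (1 + x / y) ^ c := by
    rw [← Real.mul_rpow (le_of_lt hy) (by linarith)]
    congr 1
    field_simp
    ring
  have h2 : x ^ c = y ^ c * (x / y) ^ c := by
    rw [← Real.mul_rpow (le_of_lt hy) ht0]
    congr 1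
    field_simp
  have hypos : 0 < y ^ c := Real.rpow_pos_of_pos hy c
  rw [h1, h2]
  nlinarith [mul_le_mul_of_nonneg_left hkey (le_of_lt hypos)]
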